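/- For every x ∈ ℝ with x ∉ 2πℤ, Σ_{n∈ℤ} (x − 2πn)^{−2} = (1/4)·sin^{−2}(x/2), the series converging absolutely. -/

import Mathlib

open Real

section Stmt10AuxSection
open Real Complex MeasureTheory Set AddCircle intervalIntegral

noncomputable section

namespace Stmt10Aux

variable (x : ℝ)

abbrev a : ℝ := x / (2 * Real.pi)

def f : ℝ → ℂ := fun t => Complex.exp ((a x * t : ℝ) * Complex.I)

theorem fact_pos : Fact (0 < 2 * Real.pi) := ⟨by positivity⟩

attribute [local instance] fact_pos

def g : AddCircle (2 * Real.pi) → ℂ := liftIoc (2 * Real.pi) 0 (f x)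

lemma norm_exp_sub_one_sq (θ : ℝ) :
    ‖Complex.exp ((θ : ℂ) * Complex.I) - 1‖ ^ 2 = 2 - 2 * Real.cos θ := by
  rw [Complex.exp_mul_I, ← Complex.ofReal_cos, ← Complex.ofReal_sin,
    Complex.sq_norm, Complex.normSq_apply]
  simp only [Complex.add_re, Complex.sub_re, Complex.ofReal_re, Complex.mul_re, Complex.I_re,
    Complex.I_im, Complex.ofReal_im, Complex.one_re, Complex.add_im, Complex.sub_im,
    Complex.mul_im, Complex.one_im]
  nlinarith [Real.sin_sq_add_cos_sq θ]

lemma fourierCoeff_g (hx : ∀ n : ℤ, x ≠ 2 * Real.pi * n) (n : ℤ) :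
    ‖fourierCoeff (g x) n‖ ^ 2 = 4 * Real.sin (x / 2) ^ 2 * ((x - 2 * Real.pi * n) ^ 2)⁻¹ := by
  have hπ := Real.pi_pos
  have han : a x - n ≠ 0 := by
    intro h
    apply hx n
    have : a x = n := by linarith
    field_simp [a] at this
    linarith
  set c : ℂ := ((a x - n : ℝ) : ℂ) * Complex.I with hc_def
  have hc : c ≠ 0 :=
    mul_ne_zero (Complex.ofReal_ne_zero.mpr han) Complex.I_ne_zero
  have key : fourierCoeff (g x) n =
      (1 / (2 * Real.pi)) • ((Complex.exp (c * (2 * Real.pi)) - 1) / c) := by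
    rw [fourierCoeff_eq_intervalIntegral (g x) n 0]
    congr 1
    rw [zero_add]
    rw [show (∫ t in (0:ℝ)..(2 * Real.pi), fourier (-n) (t : AddCircle (2 * Real.pi)) • g x t)
        = ∫ t in (0:ℝ)..(2 * Real.pi), Complex.exp (c * t) from ?_,
      integral_exp_mul_complex hc]
    · simp
    · apply intervalIntegral.integral_congr_ae
      apply Filter.Eventually.of_forall
      intro t ht
      rw [Set.uIoc_of_le (by positivity : (0:ℝ) ≤ 2 * Real.pi)] at ht
      have hg : g x ↑t = f x t := liftIoc_coe_apply (by simpa using ht)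
      rw [hg, fourier_coe_apply, f, smul_eq_mul, ← Complex.exp_add]
      congr 1
      have h2π : ((2 * Real.pi : ℝ) : ℂ) ≠ 0 := by
        simpa using Real.pi_ne_zero
      have hπc : (Real.pi : ℂ) ≠ 0 := Complex.ofReal_ne_zero.mpr Real.pi_ne_zero
      rw [hc_def]
      show _ = ((x / (2 * Real.pi) - (n:ℝ) : ℝ) : ℂ) * Complex.I * (t:ℂ)
      push_cast
      field_simp [hπc]
      ring
  have hr : (a x - n) * (2 * Real.pi) = x - 2 * Real.pi * n := by
    field_simp [a]
  have hval : c * (2 * Real.pi) = ((x - 2 * Real.pi * n : ℝ) : ℂ) * Complex.I := by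
    rw [hc_def, ← hr]
    push_cast
    ring
  rw [key, hval]
  simp only [norm_smul, norm_div, mul_pow, div_pow]
  rw [norm_exp_sub_one_sq]
  have hcos : Real.cos (x - 2 * Real.pi * n) = Real.cos x := by
    rw [show x - 2 * Real.pi * n = x - n * (2 * Real.pi) by ring]
    exact Real.cos_sub_int_mul_two_pi x n
  have hnc : ‖c‖ ^ 2 = (a x - n) ^ 2 := by
    rw [hc_def, norm_mul, Complex.norm_I, mul_one, Complex.norm_real, Real.norm_eq_abs, _root_.sq_abs]
  have hsin : Real.sin (x / 2) ^ 2 = (1 - Real.cos x) / 2 := by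
    have h1 : Real.cos (2 * (x / 2)) = 2 * Real.cos (x / 2) ^ 2 - 1 := Real.cos_two_mul _
    have h2 : Real.sin (x / 2) ^ 2 + Real.cos (x / 2) ^ 2 = 1 := Real.sin_sq_add_cos_sq _
    have : (2 : ℝ) * (x / 2) = x := by ring
    rw [this] at h1
    linarith
  have hxn : x - 2 * Real.pi * n = (a x - n) * (2 * Real.pi) := by
    field_simp [a]
  rw [hcos, hnc, hsin, hxn]
  have hπne : Real.pi ≠ 0 := Real.pi_ne_zero
  simp only [Real.norm_eq_abs, norm_one]
  rw [abs_of_pos (by positivity : (0:ℝ) < 2 * Real.pi)]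
  obtain ⟨A, hA⟩ : ∃ A : ℝ, A = a x - n := ⟨_, rfl⟩
  rw [← hA]
  have hA0 : A ≠ 0 := hA ▸ han
  field_simp [hA0, hπne]
  ring

lemma measurable_g : Measurable (g x) := by
  have h1 : Measurable fun z : AddCircle (2 * Real.pi) =>
      ((measurableEquivIoc (2 * Real.pi) 0) z : ℝ) :=
    measurable_subtype_coe.comp (measurableEquivIoc (2 * Real.pi) 0).measurable
  have : g x = fun z => f x (((measurableEquivIoc (2 * Real.pi) 0) z : ℝ)) := rfl
  rw [this]
  exact (Complex.continuous_exp.measurable.comp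
    ((Complex.measurable_ofReal.comp (measurable_const.mul measurable_id)).mul
      measurable_const)).comp h1

lemma norm_g (z : AddCircle (2 * Real.pi)) : ‖g x z‖ = 1 := by
  have : g x z = f x ((equivIoc (2 * Real.pi) 0 z : ℝ)) := rfl
  rw [this, f, Complex.norm_exp_ofReal_mul_I]

lemma memℒp_g : MemLp (g x) 2 (@haarAddCircle (2 * Real.pi) (fact_pos)) :=
  MemLp.of_bound (measurable_g x).aestronglyMeasurable 1
    (Filter.Eventually.of_forall fun z => (norm_g x z).le)

theorem main (hx : ∀ n : ℤ, x ≠ 2 * Real.pi * n) :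
    Summable (fun n : ℤ => ((x - 2 * Real.pi * n) ^ 2)⁻¹) ∧
    ∑' n : ℤ, ((x - 2 * Real.pi * n) ^ 2)⁻¹ = (1 / 4) * (Real.sin (x / 2) ^ 2)⁻¹ := by
  have hsin0 : Real.sin (x / 2) ≠ 0 := by
    intro h
    rcases Real.sin_eq_zero_iff.mp h with ⟨n, hn⟩
    exact hx n (by linarith)
  have hc4 : (4 * Real.sin (x / 2) ^ 2) ≠ 0 :=
    mul_ne_zero four_ne_zero (pow_ne_zero _ hsin0)
  set F := (memℒp_g x).toLp (g x) with hF
  have hcoeff : ∀ n : ℤ, fourierCoeff (F : AddCircle (2 * Real.pi) → ℂ) n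
      = fourierCoeff (g x) n := by
    intro n
    apply MeasureTheory.integral_congr_ae
    filter_upwards [(memℒp_g x).coeFn_toLp] with z hz
    rw [hz]
  have heq : ∀ n : ℤ, ‖fourierCoeff (F : AddCircle (2 * Real.pi) → ℂ) n‖ ^ 2
      = 4 * Real.sin (x / 2) ^ 2 * ((x - 2 * Real.pi * n) ^ 2)⁻¹ := fun n => by
    rw [hcoeff n, fourierCoeff_g x hx n]
  have hsum : Summable (fun n : ℤ =>
      ‖fourierCoeff (F : AddCircle (2 * Real.pi) → ℂ) n‖ ^ 2) := by
    have h1 : Memℓp (fourierBasis.repr F) 2 := lp.memℓp _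
    have h2 := h1.summable (by norm_num : 0 < (2 : ENNReal).toReal)
    refine h2.congr fun n => ?_
    rw [fourierBasis_repr]
    norm_num
  have hint : (∫ t : AddCircle (2 * Real.pi),
      ‖(F : AddCircle (2 * Real.pi) → ℂ) t‖ ^ 2 ∂haarAddCircle) = 1 := by
    have : (fun t => ‖(F : AddCircle (2 * Real.pi) → ℂ) t‖ ^ 2)
        =ᵐ[@haarAddCircle (2 * Real.pi) (fact_pos)] fun t => (1 : ℝ) := by
      filter_upwards [(memℒp_g x).coeFn_toLp] with z hz
      rw [hz, norm_g x z, one_pow]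
    rw [integral_congr_ae this]
    simp
  have hpars := tsum_sq_fourierCoeff F
  rw [hint] at hpars
  have hsum' : Summable (fun n : ℤ =>
      4 * Real.sin (x / 2) ^ 2 * ((x - 2 * Real.pi * n) ^ 2)⁻¹) :=
    hsum.congr heq
  constructor
  · exact (summable_mul_left_iff hc4).mp hsum'
  · have hts : ∑' n : ℤ, 4 * Real.sin (x / 2) ^ 2 * ((x - 2 * Real.pi * n) ^ 2)⁻¹ = 1 := by
      rw [← tsum_congr heq, hpars]
    rw [tsum_mul_left] at hts
    have : ∑' n : ℤ, ((x - 2 * Real.pi * n) ^ 2)⁻¹ = (4 * Real.sin (x / 2) ^ 2)⁻¹ := by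
      field_simp at hts ⊢
      linarith
    rw [this]
    field_simp

end Stmt10Aux

end
end Stmt10AuxSection

theorem stmt10 (x : ℝ) (hx : ∀ n : ℤ, x ≠ 2 * Real.pi * n) :
    Summable (fun n : ℤ => ((x - 2 * Real.pi * n) ^ 2)⁻¹) ∧
    ∑' n : ℤ, ((x - 2 * Real.pi * n) ^ 2)⁻¹ = (1 / 4) * (Real.sin (x / 2) ^ 2)⁻¹ := by
  exact Stmt10Aux.main x hx
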